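/- Let d : ℕ → ℕ and e : ℕ → ℕ be digit sequences with 1 ≤ d_k ≤ 8 for all k and e_k ≤ 9 for all k. If d ≠ e (the sequences differ in at least one position), then the real numbers ∑_{k=0}^∞ d_k · 10^{-(k+1)} and ∑_{k=0}^∞ e_k · 10^{-(k+1)} are different. -/

import Mathlib

lemma geom_aux_eq (c : ℝ) (n : ℕ) (i : ℕ) :
    c / 10 ^ (i + n) = (c / 10 ^ n) * (1 / 10 : ℝ) ^ i := by
  rw [pow_add, div_pow, one_pow]
  ring

lemma geom_aux_summable (c : ℝ) (n : ℕ) :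
    Summable (fun i : ℕ => c / 10 ^ (i + n)) := by
  simp only [geom_aux_eq]
  exact (summable_geometric_of_lt_one (by norm_num) (by norm_num)).mul_left _

lemma geom_aux_value (c : ℝ) (n : ℕ) :
    ∑' i : ℕ, c / 10 ^ (i + n) = (10 * c / 9) / 10 ^ n := by
  simp only [geom_aux_eq]
  rw [tsum_mul_left, tsum_geometric_of_lt_one (by norm_num) (by norm_num)]
  norm_num
  ring

lemma digit_summable (a : ℕ → ℕ) (ha : ∀ k, a k ≤ 9) :
    Summable (fun k : ℕ => (a k : ℝ) / 10 ^ (k + 1)) := by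
  apply Summable.of_nonneg_of_le (fun k => by positivity)
    (f := fun k : ℕ => (9 : ℝ) / 10 ^ (k + 1))
  · intro k
    have h9 : (a k : ℝ) ≤ 9 := by exact_mod_cast ha k
    gcongr
  · exact geom_aux_summable 9 1

/-- Arithmetical core of the diagonal argument: decimal expansions whose digits
lie in {1,…,8} are unique, so two different digit sequences (one with digits in
{1,…,8}, the other with digits ≤ 9) give different real numbers. -/
theorem decimal_digits_injective (d e : ℕ → ℕ)
    (hd : ∀ k, 1 ≤ d k ∧ d k ≤ 8) (he : ∀ k, e k ≤ 9) (hne : d ≠ e) :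
    (∑' k : ℕ, (d k : ℝ) / 10 ^ (k + 1)) ≠ ∑' k : ℕ, (e k : ℝ) / 10 ^ (k + 1) := by
  intro h
  set f : ℕ → ℝ := fun k => (d k : ℝ) / 10 ^ (k + 1) with hf
  set g : ℕ → ℝ := fun k => (e k : ℝ) / 10 ^ (k + 1) with hg
  have hfs : Summable f := digit_summable d fun k => (hd k).2.trans (by norm_num)
  have hgs : Summable g := digit_summable e he
  -- least differing index
  have hex : ∃ k, d k ≠ e k := Function.ne_iff.mp hne
  classical
  set m := Nat.find hex with hmdef
  have hm : d m ≠ e m := Nat.find_spec hex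
  have hlt : ∀ k < m, d k = e k := fun k hk => by
    by_contra hc; exact absurd hk (not_lt.mpr (Nat.find_le hc))
  -- partial sums agree
  have hpart : ∑ i ∈ Finset.range m, f i = ∑ i ∈ Finset.range m, g i :=
    Finset.sum_congr rfl fun i hi => by
      simp only [hf, hg, hlt i (Finset.mem_range.mp hi)]
  have h1 := Summable.sum_add_tsum_nat_add m hfs
  have h2 := Summable.sum_add_tsum_nat_add m hgs
  have htail : ∑' i, f (i + m) = ∑' i, g (i + m) := by
    have := h.symm
    linarith [h1, h2]
  -- peel off index m
  have hfs' : Summable (fun i => f (i + m)) := (summable_nat_add_iff m).mpr hfs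
  have hgs' : Summable (fun i => g (i + m)) := (summable_nat_add_iff m).mpr hgs
  have h3 := Summable.tsum_eq_zero_add hfs'
  have h4 := Summable.tsum_eq_zero_add hgs'
  rw [h3, h4] at htail
  simp only [zero_add] at htail
  set Td := ∑' i : ℕ, f (i + 1 + m) with hTd
  set Te := ∑' i : ℕ, g (i + 1 + m) with hTe
  -- htail : f m + Td = g m + Te
  have hTds : Summable (fun i : ℕ => f (i + 1 + m)) := by
    have : Summable (fun i : ℕ => f (i + (1 + m))) := (summable_nat_add_iff (1 + m)).mpr hfs
    simpa [add_assoc] using this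
  have hTes : Summable (fun i : ℕ => g (i + 1 + m)) := by
    have : Summable (fun i : ℕ => g (i + (1 + m))) := (summable_nat_add_iff (1 + m)).mpr hgs
    simpa [add_assoc] using this
  -- bounds on tails
  have hTd_ub : Td ≤ (10 * 8 / 9) / 10 ^ (m + 2) := by
    rw [hTd, ← geom_aux_value 8 (m + 2)]
    refine Summable.tsum_le_tsum (fun i => ?_) hTds (geom_aux_summable 8 (m + 2))
    have h8 : (d (i + 1 + m) : ℝ) ≤ 8 := by exact_mod_cast (hd _).2
    have hexp : i + 1 + m + 1 = i + (m + 2) := by omega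
    simp only [hf, hexp]
    gcongr
  have hTd_lb : (10 * 1 / 9) / 10 ^ (m + 2) ≤ Td := by
    rw [hTd, ← geom_aux_value 1 (m + 2)]
    refine Summable.tsum_le_tsum (fun i => ?_) (geom_aux_summable 1 (m + 2)) hTds
    have h1' : (1 : ℝ) ≤ (d (i + 1 + m) : ℝ) := by exact_mod_cast (hd _).1
    have hexp : i + 1 + m + 1 = i + (m + 2) := by omega
    simp only [hf, hexp]
    gcongr
  have hTe_ub : Te ≤ (10 * 9 / 9) / 10 ^ (m + 2) := by
    rw [hTe, ← geom_aux_value 9 (m + 2)]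
    refine Summable.tsum_le_tsum (fun i => ?_) hTes (geom_aux_summable 9 (m + 2))
    have h9 : (e (i + 1 + m) : ℝ) ≤ 9 := by exact_mod_cast he _
    have hexp : i + 1 + m + 1 = i + (m + 2) := by omega
    simp only [hg, hexp]
    gcongr
  have hTe_lb : 0 ≤ Te := tsum_nonneg fun i => by positivity
  -- rescale
  set u : ℝ := (10 : ℝ) ^ (m + 1) with hu
  have hupos : 0 < u := by positivity
  have hpow : (10 : ℝ) ^ (m + 2) = 10 * u := by rw [hu]; ring
  have hfm : f m = (d m : ℝ) / u := rfl
  have hgm : g m = (e m : ℝ) / u := rfl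
  have key : (d m : ℝ) + u * Td = (e m : ℝ) + u * Te := by
    have := htail
    rw [hfm, hgm] at this
    field_simp at this
    linarith
  have hud : u * Td ≤ 8 / 9 := by
    have := mul_le_mul_of_nonneg_left hTd_ub hupos.le
    rw [hpow] at this
    calc u * Td ≤ u * ((10 * 8 / 9) / (10 * u)) := this
      _ = 8 / 9 := by field_simp
  have hud' : 1 / 9 ≤ u * Td := by
    have := mul_le_mul_of_nonneg_left hTd_lb hupos.le
    rw [hpow] at this
    calc (1 : ℝ) / 9 = u * ((10 * 1 / 9) / (10 * u)) := by field_simp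
      _ ≤ u * Td := this
  have hue : u * Te ≤ 1 := by
    have := mul_le_mul_of_nonneg_left hTe_ub hupos.le
    rw [hpow] at this
    calc u * Te ≤ u * ((10 * 9 / 9) / (10 * u)) := this
      _ = 1 := by field_simp
  have hue' : 0 ≤ u * Te := by positivity
  rcases Nat.lt_or_ge (d m) (e m) with hc | hc
  · have : (d m : ℝ) + 1 ≤ (e m : ℝ) := by exact_mod_cast hc
    linarith
  · have hc' : e m < d m := lt_of_le_of_ne hc (fun h' => hm h'.symm)
    have : (e m : ℝ) + 1 ≤ (d m : ℝ) := by exact_mod_cast hc'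
    linarith
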